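/- For every θ ∈ S₀ (i.e. ‖θ‖₂ = 1 and Σ_i θ_i = 0) one has Γ(Ψ(θ)) = θ; i.e. (Ψ(θ) − C)/‖Ψ(θ) − C‖₂ = θ. In particular Γ maps ∂Δ onto S₀. -/

import Mathlib

open scoped BigOperators

/-- The map `Γ(β) = (β - C)/‖β - C‖₂`. -/
noncomputable def Gamma (V : ℕ) (C β : EuclideanSpace ℝ (Fin V)) :
    EuclideanSpace ℝ (Fin V) :=
  ‖β - C‖⁻¹ • (β - C)

/-- The map `Ψ(θ) = -θ/(min_i θ_i/c_i) + C`. -/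
noncomputable def Psi (V : ℕ) (hV : 0 < V) (C θ : EuclideanSpace ℝ (Fin V)) :
    EuclideanSpace ℝ (Fin V) :=
  (-(Finset.univ.inf' ⟨⟨0, hV⟩, Finset.mem_univ _⟩ fun i => θ i / C i)⁻¹) • θ + C

lemma inf_neg_aux (V : ℕ) (hV : 0 < V) (C θ : EuclideanSpace ℝ (Fin V))
    (hC0 : ∀ i, 0 < C i) (hnorm : ‖θ‖ = 1) (hsum : ∑ i, θ i = 0) :
    Finset.univ.inf' ⟨⟨0, hV⟩, Finset.mem_univ _⟩ (fun i => θ i / C i) < 0 := by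
  have hθne : θ ≠ 0 := by
    intro h; rw [h, norm_zero] at hnorm; norm_num at hnorm
  have hneg : ∃ i, θ i < 0 := by
    by_contra h
    push_neg at h
    have : ∀ i ∈ Finset.univ, θ i = 0 :=
      (Finset.sum_eq_zero_iff_of_nonneg (fun i _ => h i)).1 hsum
    exact hθne (by ext i; exact this i (Finset.mem_univ i))
  obtain ⟨i, hi⟩ := hneg
  exact lt_of_le_of_lt (Finset.inf'_le _ (Finset.mem_univ i))
    (div_neg_of_neg_of_pos hi (hC0 i))

/-- For every `θ ∈ S₀` one has `Γ(Ψ(θ)) = θ`; in particular `Γ`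
maps `∂Δ` onto `S₀`. -/
theorem stmt3 (V : ℕ) (hV : 2 ≤ V) (C : EuclideanSpace ℝ (Fin V))
    (hC0 : ∀ i, 0 < C i) (hC1 : ∑ i, C i = 1) :
    (∀ θ : EuclideanSpace ℝ (Fin V), ‖θ‖ = 1 → (∑ i, θ i) = 0 →
        Gamma V C (Psi V (by omega) C θ) = θ) ∧
    Set.SurjOn (Gamma V C)
      {β : EuclideanSpace ℝ (Fin V) |
        (∀ i, 0 ≤ β i) ∧ (∑ i, β i) = 1 ∧ ∃ i, β i = 0}
      {θ : EuclideanSpace ℝ (Fin V) | ‖θ‖ = 1 ∧ (∑ i, θ i) = 0} := by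
  have hV0 : 0 < V := by omega
  have key : ∀ θ : EuclideanSpace ℝ (Fin V), ‖θ‖ = 1 → (∑ i, θ i) = 0 →
      Gamma V C (Psi V hV0 C θ) = θ := by
    intro θ hnorm hsum
    set m := Finset.univ.inf' ⟨⟨0, hV0⟩, Finset.mem_univ _⟩ (fun i => θ i / C i) with hm
    have hmlt : m < 0 := inf_neg_aux V hV0 C θ hC0 hnorm hsum
    have hapos : 0 < -m⁻¹ := by
      have : m⁻¹ < 0 := inv_lt_zero.mpr hmlt; linarith
    have hPsiC : Psi V hV0 C θ - C = (-m⁻¹) • θ := by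
      simp only [Psi, ← hm, add_sub_cancel_right]
    unfold Gamma
    rw [hPsiC, norm_smul, hnorm, mul_one, Real.norm_eq_abs, abs_of_pos hapos,
      smul_smul, inv_mul_cancel₀ hapos.ne', one_smul]
  refine ⟨fun θ h1 h2 => key θ h1 h2, ?_⟩
  intro θ hθ
  obtain ⟨hnorm, hsum⟩ := hθ
  set m := Finset.univ.inf' ⟨⟨0, hV0⟩, Finset.mem_univ _⟩ (fun i => θ i / C i) with hm
  have hmlt : m < 0 := inf_neg_aux V hV0 C θ hC0 hnorm hsum
  have hapos : 0 < -m⁻¹ := by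
    have : m⁻¹ < 0 := inv_lt_zero.mpr hmlt; linarith
  refine ⟨Psi V hV0 C θ, ⟨?_, ?_, ?_⟩, key θ hnorm hsum⟩
  · intro i
    have h1 : m ≤ θ i / C i := Finset.inf'_le _ (Finset.mem_univ i)
    have h2 : m * C i ≤ θ i := (le_div_iff₀ (hC0 i)).mp h1
    have h3 : (-m⁻¹) * (m * C i) ≤ (-m⁻¹) * θ i :=
      mul_le_mul_of_nonneg_left h2 hapos.le
    have h4 : (-m⁻¹) * (m * C i) = -C i := by
      field_simp
      rw [mul_div_cancel_left₀ _ hmlt.ne]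
    simp only [Psi, ← hm, PiLp.add_apply, PiLp.smul_apply, smul_eq_mul]
    linarith
  · have : ∀ i, (Psi V hV0 C θ) i = (-m⁻¹) * θ i + C i := by
      intro i
      simp only [Psi, ← hm, PiLp.add_apply, PiLp.smul_apply, smul_eq_mul]
    rw [Finset.sum_congr rfl (fun i _ => this i), Finset.sum_add_distrib,
      ← Finset.mul_sum, hsum, mul_zero, zero_add, hC1]
  · obtain ⟨i, _, hi⟩ := Finset.exists_mem_eq_inf' (⟨⟨0, hV0⟩, Finset.mem_univ _⟩ :
      (Finset.univ : Finset (Fin V)).Nonempty) (fun i => θ i / C i)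
    have hmi : m = θ i / C i := hi
    have hθi : θ i ≠ 0 := by
      intro h
      rw [h, zero_div] at hmi
      exact absurd (hmi ▸ hmlt) (lt_irrefl 0)
    refine ⟨i, ?_⟩
    simp only [Psi, ← hm, PiLp.add_apply, PiLp.smul_apply, smul_eq_mul]
    rw [hmi]
    field_simp
    ring
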